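/- arXiv:2009.05685 — 7 statements merged into one kernel-verified Lean document; each statement's English description precedes it below -/
import Mathlib

section
/- Let q be a prime power, S ⊆ F_q \ {0} symmetric (S = -S) with |S| = s, and G = Γ(F_q, S). If the strong power G^n contains a linear independent set of the form {(x, Ax) : x ∈ F_q^m} for a matrix A ∈ F_q^{(n−m)×m}, then s·m ≤ (n−m)·(q−1−s), i.e., m/n ≤ 1 − s/(q−1). -/
open SimpleGraph MvPolynomial

/-- The `n`-th strong power of a graph `G`: vertices are `n`-tuples, and two distinct
tuples are adjacent iff in every coordinate the entries are equal or adjacent in `G`. -/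
def strongPow {V : Type*} (G : SimpleGraph V) (n : ℕ) : SimpleGraph (Fin n → V) where
  Adj x y := x ≠ y ∧ ∀ i, x i = y i ∨ G.Adj (x i) (y i)
  symm := by
    constructor
    rintro x y ⟨hne, h⟩
    exact ⟨hne.symm, fun i => (h i).imp Eq.symm (fun hadj => hadj.symm)⟩
  loopless := by
    constructor
    rintro x ⟨hne, -⟩
    exact hne rfl

/-- The Cayley graph on the additive group of a field `F` with connection set `S`:
`u ~ v` iff `u ≠ v` and `u - v ∈ S` (symmetrized; for symmetric `S` this is `u - v ∈ S`). -/
def cayley {F : Type*} [Field F] (S : Set F) : SimpleGraph F where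
  Adj u v := u ≠ v ∧ (u - v ∈ S ∨ v - u ∈ S)
  symm := by
    constructor
    rintro u v ⟨hne, h⟩
    exact ⟨hne.symm, h.symm⟩
  loopless := by
    constructor
    rintro u ⟨hne, -⟩
    exact hne rfl

/-- A set `I` is independent in `G` if no two of its elements are adjacent. -/
def IsIndep {V : Type*} (G : SimpleGraph V) (I : Set V) : Prop :=
  ∀ x ∈ I, ∀ y ∈ I, ¬ G.Adj x y

/-- The linear independence number of the `n`-th strong power of a graph on `F`:
the largest size of an independent set which is an `F`-linear subspace of `F^n`. -/
noncomputable def alphaLin {F : Type*} [Field F] [Fintype F] (G : SimpleGraph F) (n : ℕ) : ℕ :=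
  sSup {c | ∃ W : Submodule F (Fin n → F),
    IsIndep (strongPow G n) (W : Set (Fin n → F)) ∧ Nat.card W = c}

/-- Auxiliary: the Lagrange "top coefficient" weights on a node set `T` kill all power sums
`∑ t^a` for `a < #T - 1`. -/
lemma sum_pow_mul_leadingCoeff_basis {F : Type*} [Field F] [DecidableEq F]
    (T : Finset F) (a : ℕ) (ha : a + 1 < T.card) :
    ∑ t ∈ T, t ^ a * (Lagrange.basis T id t).leadingCoeff = 0 := by
  have hdeg : (Polynomial.X ^ a : Polynomial F).degree < T.card := by
    rw [Polynomial.degree_X_pow]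
    exact_mod_cast Nat.lt_of_succ_lt ha
  have hinterp := Lagrange.eq_interpolate (v := id) (f := (Polynomial.X ^ a : Polynomial F))
    (Set.injOn_id _) hdeg
  have hco := congrArg (fun p => Polynomial.coeff p (T.card - 1)) hinterp
  simp only [Lagrange.interpolate_apply, Polynomial.finset_sum_coeff,
    Polynomial.coeff_C_mul, Polynomial.coeff_X_pow, id_eq, Polynomial.eval_pow,
    Polynomial.eval_X] at hco
  rw [if_neg (by omega)] at hco
  rw [← hco.symm]
  apply Finset.sum_congr rfl
  intro t ht
  congr 1
  have hnd : (Lagrange.basis T id t).natDegree = T.card - 1 :=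
    Lagrange.natDegree_basis (Set.injOn_id _) ht
  rw [Polynomial.leadingCoeff, hnd]

theorem stmt3 {F : Type*} [Field F] [Fintype F] [DecidableEq F]
    (S : Finset F) (hS : ∀ s ∈ S, -s ∈ S) (h0 : (0:F) ∉ S)
    (m r : ℕ) (A : Matrix (Fin r) (Fin m) F)
    (hind : IsIndep (strongPow (cayley (S : Set F)) (m + r))
      {z : Fin (m + r) → F | ∃ x : Fin m → F, z = Fin.append x (A.mulVec x)}) :
    S.card * m ≤ r * (Fintype.card F - 1 - S.card) := by
  classical
  by_contra hcon
  push_neg at hcon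
  set s := S.card with hs
  set T : Finset F := insert 0 S with hT
  have h0T : (0 : F) ∈ T := Finset.mem_insert_self _ _
  have hTcard : T.card = s + 1 := Finset.card_insert_of_notMem h0
  have hTc : Tᶜ.card = Fintype.card F - 1 - s := by
    rw [Finset.card_compl, hTcard]
    omega
  -- Step 1: independence implies that a nonzero x with entries in T has A.mulVec x ∉ T^r.
  have key : ∀ x : Fin m → F, (∀ j, x j ∈ T) → x ≠ 0 → ∃ i, A.mulVec x i ∉ T := by
    intro x hx hxne
    by_contra hall
    push_neg at hall
    refine hind (Fin.append x (A.mulVec x)) ⟨x, rfl⟩ (Fin.append 0 (A.mulVec 0)) ⟨0, rfl⟩ ?_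
    constructor
    · intro he
      apply hxne
      funext j
      have := congrFun he (Fin.castAdd r j)
      rwa [Fin.append_left, Fin.append_left] at this
    · intro k
      have hedge : ∀ u : F, u ∈ T → (u = 0 ∨ (cayley (S : Set F)).Adj u 0) := by
        intro u hu
        rcases Finset.mem_insert.mp hu with h | h
        · exact Or.inl h
        · refine Or.inr ⟨fun hz => h0 (hz ▸ h), Or.inl ?_⟩
          simpa using h
      induction k using Fin.addCases with
      | left j =>
        rw [Fin.append_left, Fin.append_left]
        simpa using hedge (x j) (hx j)
      | right i =>
        rw [Fin.append_right, Fin.append_right, Matrix.mulVec_zero]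
        simpa using hedge (A.mulVec x i) (hall i)
  -- Step 2: the polynomial P.
  set L : Fin r → MvPolynomial (Fin m) F :=
    fun i => ∑ j, MvPolynomial.C (A i j) * MvPolynomial.X j with hL
  set P : MvPolynomial (Fin m) F := ∏ i, ∏ t ∈ Tᶜ, (L i - MvPolynomial.C t) with hP
  have hPeval : ∀ x : Fin m → F,
      MvPolynomial.eval x P = ∏ i, ∏ t ∈ Tᶜ, (A.mulVec x i - t) := by
    intro x
    simp [hP, hL, Matrix.mulVec, dotProduct]
  have hPdeg : P.totalDegree ≤ r * (Fintype.card F - 1 - s) := by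
    calc P.totalDegree ≤ ∑ i : Fin r, (∏ t ∈ Tᶜ, (L i - MvPolynomial.C t)).totalDegree :=
          MvPolynomial.totalDegree_finset_prod _ _
      _ ≤ ∑ i : Fin r, ∑ t ∈ Tᶜ, (L i - MvPolynomial.C t).totalDegree := by
          apply Finset.sum_le_sum
          intro i _
          exact MvPolynomial.totalDegree_finset_prod _ _
      _ ≤ ∑ i : Fin r, ∑ _t ∈ Tᶜ, 1 := by
          apply Finset.sum_le_sum
          intro i _
          apply Finset.sum_le_sum
          intro t _
          calc (L i - MvPolynomial.C t).totalDegree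
              = (L i + MvPolynomial.C (-t)).totalDegree := by rw [map_neg, sub_eq_add_neg]
            _ ≤ max (L i).totalDegree (MvPolynomial.C (-t) : MvPolynomial (Fin m) F).totalDegree :=
                MvPolynomial.totalDegree_add _ _
            _ ≤ 1 := by
                apply max_le _ (by simp [MvPolynomial.totalDegree_C])
                refine (MvPolynomial.totalDegree_finset_sum _ _).trans (Finset.sup_le fun j _ => ?_)
                calc (MvPolynomial.C (A i j) * MvPolynomial.X j).totalDegree
                    ≤ (MvPolynomial.C (A i j) : MvPolynomial (Fin m) F).totalDegree
                      + (MvPolynomial.X j : MvPolynomial (Fin m) F).totalDegree :=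
                      MvPolynomial.totalDegree_mul _ _
                  _ ≤ 1 := by simp [MvPolynomial.totalDegree_C, MvPolynomial.totalDegree_X]
      _ = r * (Fintype.card F - 1 - s) := by simp [hTc, mul_comm]
  -- the weights
  set w : F → F := fun t => (Lagrange.basis T id t).leadingCoeff with hw
  have hw0 : w 0 ≠ 0 :=
    Polynomial.leadingCoeff_ne_zero.mpr (Lagrange.basis_ne_zero (Set.injOn_id _) h0T)
  -- Step 3: the weighted sum vanishes by degree considerations.
  have hmain : ∑ x ∈ Fintype.piFinset (fun _ : Fin m => T),
      MvPolynomial.eval x P * ∏ j, w (x j) = 0 := by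
    have hexp : ∀ x : Fin m → F,
        MvPolynomial.eval x P = ∑ d ∈ P.support, P.coeff d * ∏ j, x j ^ d j :=
      fun x => MvPolynomial.eval_eq' x P
    calc ∑ x ∈ Fintype.piFinset (fun _ : Fin m => T),
          MvPolynomial.eval x P * ∏ j, w (x j)
        = ∑ x ∈ Fintype.piFinset (fun _ : Fin m => T), ∑ d ∈ P.support,
            P.coeff d * ∏ j, (x j ^ d j * w (x j)) := by
          apply Finset.sum_congr rfl
          intro x _
          rw [hexp x, Finset.sum_mul]
          apply Finset.sum_congr rfl
          intro d _
          rw [Finset.prod_mul_distrib, mul_assoc]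
      _ = ∑ d ∈ P.support, ∑ x ∈ Fintype.piFinset (fun _ : Fin m => T),
            P.coeff d * ∏ j, (x j ^ d j * w (x j)) := Finset.sum_comm
      _ = 0 := by
          apply Finset.sum_eq_zero
          intro d hd
          rw [← Finset.mul_sum,
            ← Finset.prod_univ_sum (fun _ : Fin m => T) (fun (j : Fin m) (u : F) => u ^ d j * w u)]
          have hdeg : ∑ j, d j ≤ r * (Fintype.card F - 1 - s) := by
            refine le_trans ?_ (le_trans (MvPolynomial.le_totalDegree hd) hPdeg)
            rw [Finsupp.sum_fintype]
            intro j; rfl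
          obtain ⟨j₀, hj₀⟩ : ∃ j₀ : Fin m, d j₀ < s := by
            by_contra hno
            push_neg at hno
            have : s * m ≤ ∑ j, d j := by
              calc s * m = ∑ _j : Fin m, s := by simp [mul_comm]
                _ ≤ ∑ j, d j := Finset.sum_le_sum fun j _ => hno j
            omega
          have hz : ∑ t ∈ T, t ^ d j₀ * w t = 0 :=
            sum_pow_mul_leadingCoeff_basis T (d j₀) (by omega)
          rw [Finset.prod_eq_zero (Finset.mem_univ j₀) hz, mul_zero]
  -- Step 4: but the sum equals a nonzero value.
  have hsingle : ∑ x ∈ Fintype.piFinset (fun _ : Fin m => T),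
      MvPolynomial.eval x P * ∏ j, w (x j)
      = MvPolynomial.eval (0 : Fin m → F) P * w 0 ^ m := by
    rw [Finset.sum_eq_single_of_mem (0 : Fin m → F)
      (Fintype.mem_piFinset.mpr fun _ => h0T)]
    · simp
    · intro x hx hxne
      obtain ⟨i, hi⟩ := key x (fun j => Fintype.mem_piFinset.mp hx j) hxne
      have : MvPolynomial.eval x P = 0 := by
        rw [hPeval]
        apply Finset.prod_eq_zero (Finset.mem_univ i)
        exact Finset.prod_eq_zero (Finset.mem_compl.mpr hi) (sub_self _)
      rw [this, zero_mul]
  have hne : MvPolynomial.eval (0 : Fin m → F) P * w 0 ^ m ≠ 0 := by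
    apply mul_ne_zero _ (pow_ne_zero _ hw0)
    rw [hPeval]
    apply Finset.prod_ne_zero_iff.mpr
    intro i _
    apply Finset.prod_ne_zero_iff.mpr
    intro t ht
    rw [Matrix.mulVec_zero]
    simp only [Pi.zero_apply, zero_sub, neg_ne_zero]
    intro hz
    exact (Finset.mem_compl.mp ht) (hz ▸ h0T)
  rw [hsingle] at hmain
  exact hne hmain
end

section
/- Let q be a prime power, S ⊆ F_q \ {0} symmetric, and G = Γ(F_q, S). Then for every n ≥ 1, every independent set of G^n that is a linear subspace of F_q^n has size at most q^{n(1 − |S|/(q−1))}. Consequently the linear Shannon capacity Θ_lin(G) = sup_n α_lin(G^n)^{1/n} is at most q^{1 − |S|/(q−1)}. -/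
open SimpleGraph MvPolynomial

lemma key {F : Type*} [Field F] [Fintype F] [DecidableEq F]
    (S : Finset F) (h0 : (0:F) ∉ S) (n : ℕ)
    (W : Submodule F (Fin n → F))
    (hW : IsIndep (strongPow (cayley (S : Set F)) n) (W : Set (Fin n → F))) :
    (Fintype.card F - 1) * Module.finrank F W ≤ n * (Fintype.card F - 1 - S.card) := by
  classical
  set q := Fintype.card F with hq
  set k := Module.finrank F W with hk
  set T : Finset F := Finset.univ \ insert (0:F) S with hT
  have hTcard : T.card = q - 1 - S.card := by
    rw [hT, Finset.card_sdiff_of_subset (Finset.subset_univ _), Finset.card_insert_of_notMem h0,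
      Finset.card_univ, Nat.sub_sub]
    omega
  -- the structural property
  have hprop : ∀ w : Fin n → F, w ∈ W → w ≠ 0 → ∃ i, w i ∈ T := by
    intro w hw hwne
    have h : ¬ (w ≠ 0 ∧ ∀ i, w i = (0 : Fin n → F) i ∨
        ((w i ≠ (0 : Fin n → F) i) ∧ (w i - (0 : Fin n → F) i ∈ (S : Set F) ∨
          (0 : Fin n → F) i - w i ∈ (S : Set F)))) := hW w hw 0 (Submodule.zero_mem W)
    push_neg at h
    obtain ⟨i, h1, h2⟩ := h hwne
    refine ⟨i, ?_⟩
    have h3 := h2 h1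
    simp only [Pi.zero_apply, sub_zero, zero_sub, Finset.mem_coe] at h3 h1
    simp only [hT, Finset.mem_sdiff, Finset.mem_univ, Finset.mem_insert, true_and]
    push_neg
    exact ⟨h1, fun hmem => h3.1 hmem⟩
  -- basis
  have : Module.Finite F W := inferInstance
  let b : Module.Basis (Fin k) F W := Module.finBasis F W
  -- polynomial
  let L : Fin n → MvPolynomial (Fin k) F := fun i => ∑ j, C ((b j : Fin n → F) i) * X j
  let f : MvPolynomial (Fin k) F := ∏ i, ∏ τ ∈ T, (L i - C τ)
  have hLeval : ∀ (x : Fin k → F) (i : Fin n),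
      eval x (L i) = ((b.equivFun.symm x : W) : Fin n → F) i := by
    intro x i
    rw [Module.Basis.equivFun_symm_apply]
    simp only [L, map_sum, map_mul, eval_C, eval_X, AddSubmonoidClass.coe_finset_sum,
      Finset.sum_apply, SetLike.val_smul, Pi.smul_apply, smul_eq_mul]
    exact Finset.sum_congr rfl fun j _ => mul_comm _ _
  have hdeg : f.totalDegree ≤ n * T.card := by
    calc f.totalDegree ≤ ∑ i : Fin n, (∏ τ ∈ T, (L i - C τ)).totalDegree :=
          totalDegree_finset_prod _ _
      _ ≤ ∑ i : Fin n, ∑ τ ∈ T, (L i - C τ).totalDegree := by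
          apply Finset.sum_le_sum
          intro i _
          exact totalDegree_finset_prod _ _
      _ ≤ ∑ i : Fin n, ∑ τ ∈ T, 1 := by
          apply Finset.sum_le_sum
          intro i _
          apply Finset.sum_le_sum
          intro τ _
          have : (L i - C τ) = L i + C (-τ) := by ring_nf; rw [map_neg]; ring
          rw [this]
          refine le_trans (totalDegree_add _ _) ?_
          simp only [totalDegree_C, max_le_iff]
          constructor
          · refine le_trans (totalDegree_finset_sum _ _) ?_
            apply Finset.sup_le
            intro j _
            refine le_trans (totalDegree_mul _ _) ?_
            simp [totalDegree_C, totalDegree_X]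
          · exact Nat.zero_le 1
      _ = n * T.card := by simp [mul_comm]
  have heval0 : eval (0 : Fin k → F) f ≠ 0 := by
    simp only [f, map_prod, map_sub, eval_C]
    apply Finset.prod_ne_zero_iff.mpr
    intro i _
    apply Finset.prod_ne_zero_iff.mpr
    intro τ hτ
    have hτ0 : τ ≠ 0 := by
      simp only [hT, Finset.mem_sdiff, Finset.mem_insert] at hτ
      push_neg at hτ
      exact hτ.2.1
    have : eval (0 : Fin k → F) (L i) = 0 := by
      rw [hLeval]
      simp
    rw [this]
    simpa using hτ0
  have hevalx : ∀ x : Fin k → F, x ≠ 0 → eval x f = 0 := by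
    intro x hx
    set w : W := b.equivFun.symm x with hw
    have hwne : (w : Fin n → F) ≠ 0 := by
      simp only [ne_eq, ZeroMemClass.coe_eq_zero, hw, LinearEquiv.map_eq_zero_iff]
      exact hx
    obtain ⟨i, hi⟩ := hprop w w.2 hwne
    simp only [f, map_prod]
    apply Finset.prod_eq_zero (Finset.mem_univ i)
    apply Finset.prod_eq_zero hi
    rw [map_sub, eval_C, hLeval]
    simp [hw]
  have hsum : ∑ x : Fin k → F, eval x f ≠ 0 := by
    rw [Finset.sum_eq_single_of_mem 0 (Finset.mem_univ _) (fun x _ hx => hevalx x hx)]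
    exact heval0
  by_contra hcon
  push_neg at hcon
  apply hsum
  apply MvPolynomial.sum_eval_eq_zero
  rw [Fintype.card_fin]
  exact lt_of_le_of_lt hdeg (by rw [hTcard]; exact hcon)

theorem stmt4 {F : Type*} [Field F] [Fintype F] [DecidableEq F]
    (S : Finset F) (hS : ∀ s ∈ S, -s ∈ S) (h0 : (0:F) ∉ S) :
    (∀ n : ℕ, 1 ≤ n → ∀ W : Submodule F (Fin n → F),
      IsIndep (strongPow (cayley (S : Set F)) n) (W : Set (Fin n → F)) →
      (Nat.card W : ℝ) ≤ (Fintype.card F : ℝ) ^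
        ((n : ℝ) * (1 - (S.card : ℝ) / ((Fintype.card F : ℝ) - 1)))) ∧
    (⨆ n : ℕ, ((alphaLin (cayley (S : Set F)) (n + 1) : ℝ) ^ ((1 : ℝ) / ((n : ℝ) + 1)))) ≤
      (Fintype.card F : ℝ) ^ (1 - (S.card : ℝ) / ((Fintype.card F : ℝ) - 1)) := by
  classical
  have hq2 : 1 < Fintype.card F := Fintype.one_lt_card
  set Q : ℝ := (Fintype.card F : ℝ) with hQ
  set β : ℝ := 1 - (S.card : ℝ) / (Q - 1) with hβ
  have hQ1 : (1:ℝ) < Q := by rw [hQ]; exact_mod_cast hq2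
  have hQ0 : (0:ℝ) < Q - 1 := by linarith
  have hScard : S.card ≤ Fintype.card F - 1 := by
    have hsub : S ⊆ Finset.univ.erase (0:F) := fun x hx =>
      Finset.mem_erase.mpr ⟨fun h => h0 (h ▸ hx), Finset.mem_univ x⟩
    have := Finset.card_le_card hsub
    simpa [Finset.card_erase_of_mem, Finset.card_univ] using this
  have main : ∀ n : ℕ, ∀ W : Submodule F (Fin n → F),
      IsIndep (strongPow (cayley (S : Set F)) n) (W : Set (Fin n → F)) →
      (Nat.card W : ℝ) ≤ Q ^ ((n : ℝ) * β) := by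
    intro n W hW
    have hkey := key S h0 n W hW
    have hcard : Nat.card W = Fintype.card F ^ Module.finrank F W := by
      haveI : Fintype W := Fintype.ofFinite W
      rw [Nat.card_eq_fintype_card]
      exact Module.card_eq_pow_finrank
    set k := Module.finrank F W with hk
    have e1 : ((Fintype.card F - 1 : ℕ) : ℝ) = Q - 1 := by
      rw [Nat.cast_sub (le_of_lt hq2)]; simp [hQ]
    have e2 : ((Fintype.card F - 1 - S.card : ℕ) : ℝ) = Q - 1 - S.card := by
      rw [Nat.cast_sub hScard, e1]
    have h1 : (Q - 1) * (k : ℝ) ≤ (n : ℝ) * (Q - 1 - S.card) := by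
      have := (Nat.cast_le (α := ℝ)).mpr hkey
      push_cast at this
      rw [e1, e2] at this
      · exact this
    have hexp : (k : ℝ) ≤ (n : ℝ) * β := by
      rw [hβ, show (1 - (S.card:ℝ)/(Q-1)) = (Q - 1 - S.card)/(Q-1) by field_simp,
        ← mul_div_assoc, le_div_iff₀ hQ0]
      nlinarith [h1]
    calc (Nat.card W : ℝ) = Q ^ ((k:ℕ) : ℝ) := by
          rw [hcard, Real.rpow_natCast]; push_cast; ring
      _ ≤ Q ^ ((n : ℝ) * β) := by
          rw [Real.rpow_le_rpow_left_iff hQ1]; exact hexp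
  refine ⟨fun n _ W hW => main n W hW, ?_⟩
  apply ciSup_le
  intro n
  have hmem : alphaLin (cayley (S : Set F)) (n + 1) ∈
      {c | ∃ W : Submodule F (Fin (n+1) → F),
        IsIndep (strongPow (cayley (S : Set F)) (n+1)) (W : Set (Fin (n+1) → F)) ∧
        Nat.card W = c} := by
    apply Nat.sSup_mem
    · refine ⟨Nat.card (⊥ : Submodule F (Fin (n+1) → F)), ⊥, ?_, rfl⟩
      intro x hx y hy hadj
      rw [SetLike.mem_coe, Submodule.mem_bot] at hx hy
      exact hadj.1 (hx.trans hy.symm)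
    · refine ⟨Nat.card (Fin (n+1) → F), ?_⟩
      rintro c ⟨W, -, rfl⟩
      exact Nat.card_le_card_of_injective _ Subtype.val_injective
  obtain ⟨W, hWind, hWcard⟩ := hmem
  have hA : (alphaLin (cayley (S : Set F)) (n+1) : ℝ) ≤ Q ^ (((n+1 : ℕ) : ℝ) * β) := by
    rw [← hWcard]
    exact main (n+1) W hWind
  have h0A : (0:ℝ) ≤ (alphaLin (cayley (S : Set F)) (n+1) : ℝ) := Nat.cast_nonneg _
  have hQnn : (0:ℝ) ≤ Q := by linarith
  have hstep := Real.rpow_le_rpow h0A hA (by positivity : (0:ℝ) ≤ 1/((n:ℝ)+1))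
  refine le_trans hstep ?_
  rw [← Real.rpow_mul hQnn]
  have hne : ((n:ℝ)+1) ≠ 0 := by positivity
  rw [show (((n+1 : ℕ) : ℝ) * β) * (1/((n:ℝ)+1)) = β by push_cast; field_simp]
end

section
/- The linear Shannon capacity of C_5 equals √5: there exist linear independent sets in C_5^{2k} of size 5^k for all k (powers of {(x,2x)}), and no linear independent set in C_5^n exceeds size 5^{n/2}. -/
open SimpleGraph MvPolynomial

instance : Fact (Nat.Prime 5) := ⟨by norm_num⟩


-- key dimension bound via polynomial method
lemma dim_bound (n : ℕ) (W : Submodule (ZMod 5) (Fin n → ZMod 5))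
    (hW : ∀ w ∈ W, w ≠ 0 → ∃ i, (w i)^2 = -1) :
    2 * Module.finrank (ZMod 5) W ≤ n := by
  set d := Module.finrank (ZMod 5) W with hd
  let b : Module.Basis (Fin d) (ZMod 5) W := Module.finBasis (ZMod 5) W
  let ι : (Fin d → ZMod 5) →ₗ[ZMod 5] (Fin n → ZMod 5) :=
    W.subtype.comp (b.equivFun.symm : (Fin d → ZMod 5) ≃ₗ[ZMod 5] W).toLinearMap
  have hinj : Function.Injective ι :=
    W.injective_subtype.comp b.equivFun.symm.injective
  have hmem : ∀ y, ι y ∈ W := fun y => (b.equivFun.symm y).2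
  let e : Fin d → (Fin d → ZMod 5) := fun j => fun j' => if j = j' then 1 else 0
  let P : Fin n → MvPolynomial (Fin d) (ZMod 5) := fun i => ∑ j, C (ι (e j) i) * X j
  have hevalP : ∀ (y : Fin d → ZMod 5) i, eval y (P i) = ι y i := by
    intro y i
    have hy : ι y = ∑ j, y j • ι (e j) := by
      conv_lhs => rw [pi_eq_sum_univ y]
      rw [map_sum]
      exact Finset.sum_congr rfl fun j _ => map_smul ι _ _
    simp only [P, map_sum, map_mul, eval_C, eval_X, hy, Finset.sum_apply, Pi.smul_apply,
      smul_eq_mul]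
    exact Finset.sum_congr rfl fun j _ => mul_comm _ _
  let g : MvPolynomial (Fin d) (ZMod 5) := ∏ i, (P i ^ 2 + 1)
  have hdeg : g.totalDegree ≤ 2 * n := by
    have h1 : ∀ i, (P i).totalDegree ≤ 1 := by
      intro i
      refine (totalDegree_finset_sum _ _).trans (Finset.sup_le fun j _ => ?_)
      calc (C (ι (e j) i) * X j).totalDegree ≤ _ + _ := totalDegree_mul _ _
        _ ≤ 1 := by rw [totalDegree_C, totalDegree_X]
    calc g.totalDegree ≤ ∑ i : Fin n, (P i ^ 2 + 1).totalDegree := totalDegree_finset_prod _ _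
      _ ≤ ∑ _i : Fin n, 2 := by
          refine Finset.sum_le_sum fun i _ => ?_
          refine (totalDegree_add _ _).trans (max_le ?_ ?_)
          · exact (totalDegree_pow _ _).trans (by nlinarith [h1 i])
          · simp [totalDegree_one]
      _ = 2 * n := by simp [mul_comm]
  have hsum : ∑ y : Fin d → ZMod 5, eval y g = 1 := by
    have hev : ∀ y, eval y g = ∏ i, ((ι y i)^2 + 1) := by
      intro y
      simp only [g, map_prod, map_add, map_pow, map_one, hevalP]
    rw [Fintype.sum_eq_single (0 : Fin d → ZMod 5)]
    · rw [hev]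
      have : ι 0 = 0 := map_zero ι
      simp [this]
    · intro y hy
      rw [hev]
      obtain ⟨i, hi⟩ := hW (ι y) (hmem y) (fun h => hy (hinj (h.trans (map_zero ι).symm)))
      exact Finset.prod_eq_zero (Finset.mem_univ i) (by rw [hi]; ring)
  by_contra hcon
  push_neg at hcon
  have hlt : g.totalDegree < (Fintype.card (ZMod 5) - 1) * Fintype.card (Fin d) := by
    rw [ZMod.card, Fintype.card_fin]
    omega
  have := MvPolynomial.sum_eval_eq_zero g hlt
  rw [hsum] at this
  exact one_ne_zero this

lemma indep_prop (n : ℕ) (W : Submodule (ZMod 5) (Fin n → ZMod 5))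
    (h : IsIndep (strongPow (cayley ({1, 4} : Set (ZMod 5))) n) (W : Set (Fin n → ZMod 5))) :
    ∀ w ∈ W, w ≠ 0 → ∃ i, (w i)^2 = -1 := by
  intro w hw hw0
  have h0 : (0 : Fin n → ZMod 5) ∈ W := W.zero_mem
  have hna := h w hw 0 h0
  rw [strongPow] at hna
  simp only [not_and, not_forall] at hna
  obtain ⟨i, hi⟩ := hna hw0
  push_neg at hi
  obtain ⟨h1, h2⟩ := hi
  rw [cayley] at h2
  simp only [not_and, not_or] at h2
  have h3 := h2 h1
  simp only [Pi.zero_apply, sub_zero, zero_sub, Set.mem_insert_iff, Set.mem_singleton_iff, not_or] at h3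
  simp only [Pi.zero_apply] at h1
  refine ⟨i, ?_⟩
  revert h3 h1
  generalize w i = a
  revert a
  decide

lemma card_bound (n : ℕ) (W : Submodule (ZMod 5) (Fin n → ZMod 5))
    (h : IsIndep (strongPow (cayley ({1, 4} : Set (ZMod 5))) n) (W : Set (Fin n → ZMod 5))) :
    (Nat.card W : ℝ) ≤ (5 : ℝ) ^ ((n : ℝ) / 2) := by
  have hdim := dim_bound n W (indep_prop n W h)
  haveI : Fintype W := Fintype.ofFinite W
  have hcard : Nat.card W = 5 ^ Module.finrank (ZMod 5) W := by
    rw [Nat.card_eq_fintype_card, Module.card_eq_pow_finrank (K := ZMod 5), ZMod.card]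
  rw [hcard]
  push_cast
  rw [← Real.rpow_natCast (5:ℝ) (Module.finrank (ZMod 5) W)]
  apply (Real.rpow_le_rpow_left_iff (by norm_num : (1:ℝ) < 5)).mpr
  have h2 : (2 * Module.finrank (ZMod 5) W : ℝ) ≤ n := by exact_mod_cast hdim
  push_cast at h2 ⊢
  linarith

def Lmap (k : ℕ) : (Fin k → ZMod 5) →ₗ[ZMod 5] (Fin (2*k) → ZMod 5) where
  toFun x := fun i => (if (i : ℕ) % 2 = 0 then 1 else 2) * x ⟨(i : ℕ)/2, by omega⟩
  map_add' x y := by funext i; simp [mul_add]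
  map_smul' c x := by funext i; simp [smul_eq_mul]; ring_nf

lemma Lmap_inj (k : ℕ) : Function.Injective (Lmap k) := by
  rw [injective_iff_map_eq_zero]
  intro x hx
  funext j
  have hj : (2 * (j : ℕ)) < 2 * k := by omega
  have := congrFun hx ⟨2 * (j : ℕ), hj⟩
  simp only [Lmap, LinearMap.coe_mk, AddHom.coe_mk, Pi.zero_apply] at this
  have hmod : (2 * (j : ℕ)) % 2 = 0 := by omega
  have hdiv : (⟨(2 * (j : ℕ))/2, by omega⟩ : Fin k) = j := Fin.ext (by simp)
  show x j = 0
  simpa [hmod, hdiv] using this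

lemma part1 (k : ℕ) : ∃ W : Submodule (ZMod 5) (Fin (2 * k) → ZMod 5),
    IsIndep (strongPow (cayley ({1, 4} : Set (ZMod 5))) (2 * k)) (W : Set (Fin (2 * k) → ZMod 5)) ∧
    Nat.card W = 5 ^ k := by
  refine ⟨LinearMap.range (Lmap k), ?_, ?_⟩
  · rintro u hu v hv hadj
    obtain ⟨x, rfl⟩ := hu
    obtain ⟨x', rfl⟩ := hv
    obtain ⟨hne, hall⟩ := hadj
    have hxx : x ≠ x' := fun h => hne (by rw [h])
    obtain ⟨j, hj⟩ := Function.ne_iff.mp hxx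
    have hj0 : (2 * (j : ℕ)) < 2 * k := by omega
    have hj1 : (2 * (j : ℕ) + 1) < 2 * k := by omega
    have key : ∀ m : ℕ, ∀ hm : m < 2 * k,
        Lmap k x ⟨m, hm⟩ - Lmap k x' ⟨m, hm⟩ =
          (if m % 2 = 0 then 1 else 2) * (x ⟨m/2, by omega⟩ - x' ⟨m/2, by omega⟩) := by
      intro m hm
      simp only [Lmap, LinearMap.coe_mk, AddHom.coe_mk]
      ring
    have hget : ∀ m : ℕ, ∀ hm : m < 2 * k,
        Lmap k x ⟨m, hm⟩ - Lmap k x' ⟨m, hm⟩ = 0 ∨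
        (Lmap k x ⟨m, hm⟩ - Lmap k x' ⟨m, hm⟩ = 1 ∨ Lmap k x ⟨m, hm⟩ - Lmap k x' ⟨m, hm⟩ = 4) ∨
        (-(Lmap k x ⟨m, hm⟩ - Lmap k x' ⟨m, hm⟩) = 1 ∨ -(Lmap k x ⟨m, hm⟩ - Lmap k x' ⟨m, hm⟩) = 4) := by
      intro m hm
      rcases hall ⟨m, hm⟩ with h | h
      · exact Or.inl (sub_eq_zero_of_eq h)
      · obtain ⟨-, h⟩ := h
        refine Or.inr (h.imp ?_ ?_) <;>
          simp only [Set.mem_insert_iff, Set.mem_singleton_iff, neg_sub] <;> exact id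
    have h0 := hget (2 * (j : ℕ)) hj0
    have h1 := hget (2 * (j : ℕ) + 1) hj1
    rw [key] at h0 h1
    have hm0 : (2 * (j : ℕ)) % 2 = 0 := by omega
    have hm1 : (2 * (j : ℕ) + 1) % 2 = 1 := by omega
    have hd0 : (⟨(2 * (j : ℕ))/2, by omega⟩ : Fin k) = j := Fin.ext (by simp)
    have hd1 : (⟨(2 * (j : ℕ) + 1)/2, by omega⟩ : Fin k) = j := Fin.ext (by simp; omega)
    rw [hm0, hd0] at h0
    rw [hm1, hd1] at h1
    simp only [if_pos rfl, one_mul] at h0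
    norm_num at h1
    have hzero : x j - x' j ≠ 0 := sub_ne_zero_of_ne hj
    revert h0 h1 hzero
    generalize x j - x' j = a
    revert a
    decide
  · have h1 : Nat.card (LinearMap.range (Lmap k)) = Nat.card (Fin k → ZMod 5) :=
      Nat.card_congr (LinearEquiv.ofInjective (Lmap k) (Lmap_inj k)).toEquiv.symm
    rw [h1, Nat.card_pi]
    simp [Nat.card_eq_fintype_card, ZMod.card]

lemma setBdd (n : ℕ) : BddAbove {c | ∃ W : Submodule (ZMod 5) (Fin n → ZMod 5),
    IsIndep (strongPow (cayley ({1, 4} : Set (ZMod 5))) n) (W : Set (Fin n → ZMod 5)) ∧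
    Nat.card W = c} := by
  refine ⟨5 ^ n, fun c hc => ?_⟩
  obtain ⟨W, -, rfl⟩ := hc
  calc Nat.card W ≤ Nat.card (Fin n → ZMod 5) :=
        Nat.card_le_card_of_injective _ Subtype.val_injective
    _ = 5 ^ n := by rw [Nat.card_pi]; simp [Nat.card_eq_fintype_card, ZMod.card]

lemma one_mem (n : ℕ) : 1 ∈ {c | ∃ W : Submodule (ZMod 5) (Fin n → ZMod 5),
    IsIndep (strongPow (cayley ({1, 4} : Set (ZMod 5))) n) (W : Set (Fin n → ZMod 5)) ∧
    Nat.card W = c} := by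
  refine ⟨⊥, fun x hx y hy hadj => ?_, Nat.card_unique⟩
  simp only [SetLike.mem_coe, Submodule.mem_bot] at hx hy
  exact hadj.ne (hx.trans hy.symm)

lemma alphaLin_le (n : ℕ) :
    ((alphaLin (cayley ({1, 4} : Set (ZMod 5))) n : ℝ)) ≤ (5 : ℝ) ^ ((n : ℝ) / 2) := by
  have hmem := Nat.sSup_mem ⟨1, one_mem n⟩ (setBdd n)
  obtain ⟨W, hind, hcard⟩ := hmem
  rw [alphaLin, ← hcard]
  exact card_bound n W hind

lemma alphaLin_two : 5 ≤ alphaLin (cayley ({1, 4} : Set (ZMod 5))) 2 := by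
  obtain ⟨W, hind, hcard⟩ := part1 1
  refine le_csSup (setBdd 2) ⟨W, hind, ?_⟩
  rw [hcard]; norm_num

theorem stmt10 :
    (∀ k : ℕ, ∃ W : Submodule (ZMod 5) (Fin (2 * k) → ZMod 5),
      IsIndep (strongPow (cayley ({1, 4} : Set (ZMod 5))) (2 * k)) (W : Set (Fin (2 * k) → ZMod 5)) ∧
      Nat.card W = 5 ^ k) ∧
    (∀ n : ℕ, ∀ W : Submodule (ZMod 5) (Fin n → ZMod 5),
      IsIndep (strongPow (cayley ({1, 4} : Set (ZMod 5))) n) (W : Set (Fin n → ZMod 5)) →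
      (Nat.card W : ℝ) ≤ (5 : ℝ) ^ ((n : ℝ) / 2)) ∧
    (⨆ n : ℕ, ((alphaLin (cayley ({1, 4} : Set (ZMod 5))) (n + 1) : ℝ) ^
        ((1 : ℝ) / ((n : ℝ) + 1)))) = Real.sqrt 5 := by
  refine ⟨part1, fun n W h => card_bound n W h, ?_⟩
  have hub : ∀ n : ℕ, ((alphaLin (cayley ({1, 4} : Set (ZMod 5))) (n + 1) : ℝ) ^
      ((1 : ℝ) / ((n : ℝ) + 1))) ≤ Real.sqrt 5 := by
    intro n
    have h1 : ((alphaLin (cayley ({1, 4} : Set (ZMod 5))) (n + 1) : ℝ)) ≤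
        (5 : ℝ) ^ (((n : ℝ) + 1) / 2) := by
      have := alphaLin_le (n + 1)
      push_cast at this
      exact this
    have hn : (0:ℝ) < (n : ℝ) + 1 := by positivity
    calc ((alphaLin (cayley ({1, 4} : Set (ZMod 5))) (n + 1) : ℝ) ^ ((1 : ℝ) / ((n : ℝ) + 1)))
        ≤ ((5 : ℝ) ^ (((n : ℝ) + 1) / 2)) ^ ((1 : ℝ) / ((n : ℝ) + 1)) :=
          Real.rpow_le_rpow (Nat.cast_nonneg _) h1 (by positivity)
      _ = (5 : ℝ) ^ ((1 : ℝ) / 2) := by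
          rw [← Real.rpow_mul (by norm_num : (0:ℝ) ≤ 5)]
          congr 1
          field_simp
      _ = Real.sqrt 5 := (Real.sqrt_eq_rpow 5).symm
  have hbdd : BddAbove (Set.range fun n : ℕ =>
      ((alphaLin (cayley ({1, 4} : Set (ZMod 5))) (n + 1) : ℝ) ^ ((1 : ℝ) / ((n : ℝ) + 1)))) :=
    ⟨Real.sqrt 5, by rintro x ⟨n, rfl⟩; exact hub n⟩
  refine le_antisymm (ciSup_le hub) (le_ciSup_of_le hbdd 1 ?_)
  have h2 : ((1:ℕ):ℝ) + 1 = 2 := by norm_num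
  have h5 : (5:ℝ) ≤ (alphaLin (cayley ({1, 4} : Set (ZMod 5))) (1 + 1) : ℝ) := by
    exact_mod_cast alphaLin_two
  rw [h2, Real.sqrt_eq_rpow]
  exact Real.rpow_le_rpow (by norm_num) h5 (by norm_num)
end

section
/- Let q ≡ 1 (mod 4) be a prime power and P_q the Paley graph on F_q. For any quadratic non-residue a, the set {(x, a·x) : x ∈ F_q} is an independent set of size q in the strong square P_q^2. Hence α_lin(P_q^2) ≥ q and Θ_lin(P_q) ≥ √q. -/
open SimpleGraph MvPolynomial

/-- The Paley graph on a finite field: `u ~ v` iff `u - v` is a nonzero square. -/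
def paley (F : Type*) [Field F] : SimpleGraph F := cayley {x : F | x ≠ 0 ∧ IsSquare x}


lemma paley_adj_sq {F : Type*} [Field F] (hneg : IsSquare (-1 : F)) {u v : F}
    (h : (paley F).Adj u v) : u - v ≠ 0 ∧ IsSquare (u - v) := by
  obtain ⟨hne, h | h⟩ := h
  · exact ⟨h.1, h.2⟩
  · refine ⟨sub_ne_zero.mpr hne, ?_⟩
    have : u - v = (-1) * (v - u) := by ring
    rw [this]
    exact hneg.mul h.2

lemma indep_line {F : Type*} [Field F] [Fintype F] (hq : Fintype.card F % 4 = 1)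
    (a : F) (ha0 : a ≠ 0) (ha : ¬ IsSquare a) :
    IsIndep (strongPow (paley F) 2) {z : Fin 2 → F | ∃ x : F, z = ![x, a * x]} := by
  have hneg : IsSquare (-1 : F) := by
    rw [FiniteField.isSquare_neg_one_iff]; omega
  rintro z ⟨x, rfl⟩ w ⟨y, rfl⟩ ⟨hne, hall⟩
  have h0 := hall 0
  have h1 := hall 1
  simp only [Matrix.cons_val_zero, Matrix.cons_val_one, Matrix.head_cons] at h0 h1
  rcases h0 with h0 | h0
  · subst h0; exact hne rfl
  rcases h1 with h1 | h1
  · exact hne (by rw [mul_left_cancel₀ ha0 h1])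
  obtain ⟨hd, hsq⟩ := paley_adj_sq hneg h0
  obtain ⟨-, hsq'⟩ := paley_adj_sq hneg h1
  have : a * x - a * y = a * (x - y) := by ring
  rw [this] at hsq'
  apply ha
  have : a = (a * (x - y)) * (x - y)⁻¹ := by field_simp
  rw [this]
  exact hsq'.mul hsq.inv

theorem stmt12 {F : Type*} [Field F] [Fintype F] (hq : Fintype.card F % 4 = 1)
    (a : F) (ha0 : a ≠ 0) (ha : ¬ IsSquare a) :
    IsIndep (strongPow (paley F) 2) {z : Fin 2 → F | ∃ x : F, z = ![x, a * x]} ∧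
    Nat.card {z : Fin 2 → F | ∃ x : F, z = ![x, a * x]} = Fintype.card F ∧
    Fintype.card F ≤ alphaLin (paley F) 2 ∧
    Real.sqrt (Fintype.card F) ≤
      ⨆ n : ℕ, ((alphaLin (paley F) (n + 1) : ℝ) ^ ((1 : ℝ) / ((n : ℝ) + 1))) := by
  have hindep := indep_line hq a ha0 ha
  -- equivalence F ≃ line
  have e : F ≃ {z : Fin 2 → F | ∃ x : F, z = ![x, a * x]} :=
    { toFun := fun x => ⟨![x, a * x], ⟨x, rfl⟩⟩
      invFun := fun z => z.1 0
      left_inv := fun x => by simp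
      right_inv := fun z => by
        obtain ⟨w, ⟨x, hx⟩⟩ := z
        subst hx
        simp }
  have hcard : Nat.card {z : Fin 2 → F | ∃ x : F, z = ![x, a * x]} = Fintype.card F := by
    rw [← Nat.card_congr e, Nat.card_eq_fintype_card]
  -- the span
  have hset : (↑(Submodule.span F {![1, a]}) : Set (Fin 2 → F))
      = {z : Fin 2 → F | ∃ x : F, z = ![x, a * x]} := by
    ext z
    rw [SetLike.mem_coe, Submodule.mem_span_singleton]
    constructor
    · rintro ⟨c, rfl⟩
      refine ⟨c, ?_⟩
      funext i
      fin_cases i <;> simp [mul_comm]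
    · rintro ⟨x, rfl⟩
      refine ⟨x, ?_⟩
      funext i
      fin_cases i <;> simp [mul_comm]
  -- bound for alphaLin
  have hbound : ∀ n : ℕ, ∀ c ∈ {c | ∃ W : Submodule F (Fin n → F),
      IsIndep (strongPow (paley F) n) (W : Set (Fin n → F)) ∧ Nat.card W = c},
      c ≤ Fintype.card F ^ n := by
    rintro n c ⟨W, -, rfl⟩
    calc Nat.card W ≤ Nat.card (Fin n → F) :=
          Nat.card_le_card_of_injective _ Subtype.val_injective
      _ = Fintype.card F ^ n := by
          rw [Nat.card_eq_fintype_card, Fintype.card_fun, Fintype.card_fin]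
  have halpha_le : ∀ n : ℕ, alphaLin (paley F) n ≤ Fintype.card F ^ n := fun n =>
    csSup_le' (hbound n)
  have halpha2 : Fintype.card F ≤ alphaLin (paley F) 2 := by
    apply le_csSup
    · exact ⟨Fintype.card F ^ 2, hbound 2⟩
    · refine ⟨Submodule.span F {![1, a]}, ?_, ?_⟩
      · rw [hset]; exact hindep
      · exact (Nat.card_congr (Equiv.setCongr hset)).trans hcard
  refine ⟨hindep, hcard, halpha2, ?_⟩
  have hq0 : (0 : ℝ) ≤ (Fintype.card F : ℝ) := by positivity
  -- the sup is bounded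
  have hbdd : BddAbove (Set.range fun n : ℕ =>
      ((alphaLin (paley F) (n + 1) : ℝ) ^ ((1 : ℝ) / ((n : ℝ) + 1)))) := by
    refine ⟨(Fintype.card F : ℝ), ?_⟩
    rintro x ⟨n, rfl⟩
    have h1 : ((alphaLin (paley F) (n + 1) : ℝ)) ≤ (Fintype.card F : ℝ) ^ (n + 1) := by
      exact_mod_cast halpha_le (n + 1)
    have hnn : (0 : ℝ) < (n : ℝ) + 1 := by positivity
    calc ((alphaLin (paley F) (n + 1) : ℝ)) ^ ((1 : ℝ) / ((n : ℝ) + 1))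
        ≤ ((Fintype.card F : ℝ) ^ (n + 1)) ^ ((1 : ℝ) / ((n : ℝ) + 1)) := by
          apply Real.rpow_le_rpow (by positivity) h1 (by positivity)
      _ = (Fintype.card F : ℝ) := by
          rw [← Real.rpow_natCast (Fintype.card F : ℝ) (n + 1),
            ← Real.rpow_mul hq0]
          push_cast
          rw [mul_one_div, div_self hnn.ne', Real.rpow_one]
  calc Real.sqrt (Fintype.card F) = (Fintype.card F : ℝ) ^ ((1 : ℝ) / 2) := by
        rw [Real.sqrt_eq_rpow]
    _ ≤ ((alphaLin (paley F) (1 + 1) : ℝ)) ^ ((1 : ℝ) / (((1 : ℕ) : ℝ) + 1)) := by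
        norm_num
        exact Real.rpow_le_rpow hq0 (by exact_mod_cast halpha2) (by norm_num)
    _ ≤ _ := le_ciSup hbdd 1
end

section
/- For the Paley graph P_q with q ≡ 1 (mod 4) a prime power, the linear Shannon capacity equals √q: every linear independent set in P_q^n has size at most q^{n/2}, and linear independent sets of size q^k exist in P_q^{2k}. -/
open SimpleGraph MvPolynomial

section Aux

variable {F : Type*} [Field F] [Fintype F]

lemma char_ne_two' (hq : Fintype.card F % 4 = 1) : ringChar F ≠ 2 := by
  intro h
  have := FiniteField.even_card_of_char_two (F := F) h
  omega

lemma euler_neg_one' (hq : Fintype.card F % 4 = 1) {c : F} (hc : c ≠ 0) (hns : ¬ IsSquare c) :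
    c ^ (Fintype.card F / 2) = -1 := by
  rcases FiniteField.pow_dichotomy (char_ne_two' hq) hc with h | h
  · exact absurd ((FiniteField.isSquare_iff (char_ne_two' hq) hc).mpr h) hns
  · exact h

lemma dim_le_half' (hq : Fintype.card F % 4 = 1) {n d : ℕ}
    (L : (Fin d → F) →ₗ[F] (Fin n → F))
    (hind : ∀ y : Fin d → F, y ≠ 0 → ∃ i, (L y) i ≠ 0 ∧ ¬ IsSquare ((L y) i)) :
    2 * d ≤ n := by
  classical
  by_contra hlt
  push_neg at hlt
  set q := Fintype.card F with hqdef
  have hq2 : q % 2 = 1 := by omega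
  have hq5 : 2 ≤ q := Fintype.one_lt_card
  set e := q / 2 with he
  have he1 : 1 ≤ e := by omega
  have h2e : q - 1 = 2 * e := by omega
  set M : Fin n → Fin d → F := fun i j => L (fun l => if j = l then 1 else 0) i with hM
  have hL : ∀ (y : Fin d → F) (i : Fin n), L y i = ∑ j, M i j * y j := by
    intro y i
    rw [LinearMap.pi_apply_eq_sum_univ L y]
    rw [Finset.sum_apply]
    refine Finset.sum_congr rfl fun j _ => ?_
    simp [hM, mul_comm]
  set P : MvPolynomial (Fin d) F :=
    ∏ i : Fin n, (1 + (∑ j, MvPolynomial.C (M i j) * MvPolynomial.X j) ^ e) with hP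
  have heval : ∀ y : Fin d → F, MvPolynomial.eval y P = ∏ i : Fin n, (1 + (L y i) ^ e) := by
    intro y
    rw [hP, map_prod]
    refine Finset.prod_congr rfl fun i _ => ?_
    rw [hL y i]
    simp
  have hzero : ∀ y : Fin d → F, y ≠ 0 → MvPolynomial.eval y P = 0 := by
    intro y hy
    obtain ⟨i, h0, hns⟩ := hind y hy
    rw [heval]
    refine Finset.prod_eq_zero (Finset.mem_univ i) ?_
    rw [euler_neg_one' hq h0 hns]
    ring
  have hone : MvPolynomial.eval 0 P = 1 := by
    rw [heval]
    have : ∀ i : Fin n, L (0 : Fin d → F) i = 0 := by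
      intro i; rw [map_zero]; rfl
    simp only [this]
    rw [zero_pow (by omega)]
    simp
  have hsum : ∑ y : Fin d → F, MvPolynomial.eval y P = 1 := by
    rw [Finset.sum_eq_single 0]
    · exact hone
    · intro y _ hy; exact hzero y hy
    · intro h; exact absurd (Finset.mem_univ 0) h
  have hdeg : P.totalDegree ≤ n * e := by
    refine le_trans (totalDegree_finset_prod _ _) ?_
    have hfac : ∀ i : Fin n,
        (1 + (∑ j, MvPolynomial.C (M i j) * MvPolynomial.X j) ^ e).totalDegree ≤ e := by
      intro i
      refine le_trans (totalDegree_add _ _) (max_le (by simp) ?_)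
      refine le_trans (totalDegree_pow _ _) ?_
      have hsum1 : (∑ j, MvPolynomial.C (M i j) * MvPolynomial.X j).totalDegree ≤ 1 := by
        refine le_trans (totalDegree_finset_sum _ _) (Finset.sup_le fun j _ => ?_)
        refine le_trans (totalDegree_mul _ _) ?_
        simp [totalDegree_X]
      calc e * (∑ j, MvPolynomial.C (M i j) * MvPolynomial.X j).totalDegree
          ≤ e * 1 := Nat.mul_le_mul_left e hsum1
        _ = e := mul_one e
    refine le_trans (Finset.sum_le_sum fun i _ => hfac i) ?_
    simp [Finset.sum_const, mul_comm]
  have hlt2 : P.totalDegree < (q - 1) * Fintype.card (Fin d) := by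
    refine lt_of_le_of_lt hdeg ?_
    have : n * e < 2 * e * d := by nlinarith
    simpa [h2e, Fintype.card_fin] using this
  have := MvPolynomial.sum_eval_eq_zero P hlt2
  rw [hsum] at this
  exact one_ne_zero this

end Aux


theorem stmt13 {F : Type*} [Field F] [Fintype F] (hq : Fintype.card F % 4 = 1) :
    (∀ n : ℕ, ∀ W : Submodule F (Fin n → F),
      IsIndep (strongPow (paley F) n) (W : Set (Fin n → F)) →
      (Nat.card W : ℝ) ≤ (Fintype.card F : ℝ) ^ ((n : ℝ) / 2)) ∧
    (∀ k : ℕ, ∃ W : Submodule F (Fin (2 * k) → F),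
      IsIndep (strongPow (paley F) (2 * k)) (W : Set (Fin (2 * k) → F)) ∧
      Nat.card W = Fintype.card F ^ k) := by
  constructor
  · intro n W hW
    classical
    letI : Fintype W := Fintype.ofFinite W
    set d := Module.finrank F W with hd
    let b : Module.Basis (Fin d) F W := Module.finBasis F W
    set L : (Fin d → F) →ₗ[F] (Fin n → F) := W.subtype ∘ₗ (b.equivFun.symm : (Fin d → F) →ₗ[F] W) with hLdef
    have hmem : ∀ y, L y ∈ W := fun y => (b.equivFun.symm y).2
    have hinj : Function.Injective L :=
      W.injective_subtype.comp b.equivFun.symm.injective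
    have hind : ∀ y : Fin d → F, y ≠ 0 → ∃ i, (L y) i ≠ 0 ∧ ¬ IsSquare ((L y) i) := by
      intro y hy
      have hne : L y ≠ 0 := by
        intro h
        exact hy (hinj (by rw [h, map_zero]))
      have hnadj := hW (L y) (hmem y) 0 W.zero_mem
      by_contra hcon
      push_neg at hcon
      refine hnadj ⟨hne, fun i => ?_⟩
      by_cases h0i : L y i = 0
      · left; simpa using h0i
      · right
        exact ⟨by simpa using h0i, Or.inl ⟨by simpa using h0i, by simpa using hcon i h0i⟩⟩
    have hdn : 2 * d ≤ n := dim_le_half' hq L hind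
    have hcard : Nat.card W = Fintype.card F ^ d := by
      rw [Nat.card_eq_fintype_card]
      exact Module.card_eq_pow_finrank
    rw [hcard]
    have h1 : (1 : ℝ) ≤ (Fintype.card F : ℝ) := by
      have : 1 ≤ Fintype.card F := Fintype.card_pos
      exact_mod_cast this
    calc ((Fintype.card F ^ d : ℕ) : ℝ) = (Fintype.card F : ℝ) ^ (d : ℝ) := by
          push_cast
          rw [Real.rpow_natCast]
      _ ≤ (Fintype.card F : ℝ) ^ ((n : ℝ) / 2) := by
          refine Real.rpow_le_rpow_of_exponent_le h1 ?_
          have : (2 : ℝ) * d ≤ n := by exact_mod_cast hdn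
          linarith
  · intro k
    classical
    obtain ⟨a, ha⟩ := FiniteField.exists_nonsquare (F := F) (char_ne_two' hq)
    have ha0 : a ≠ 0 := fun h => ha (h ▸ IsSquare.zero)
    have hm1 : IsSquare (-1 : F) := FiniteField.isSquare_neg_one_iff.mpr (by omega)
    have hneg : ∀ c : F, ¬ IsSquare c → ¬ IsSquare (-c) := by
      intro c hc hsq
      exact hc (by simpa using hm1.mul hsq)
    have hmul : ∀ t : F, t ≠ 0 → IsSquare t → ¬ IsSquare (a * t) := by
      rintro t ht ⟨u, rfl⟩ ⟨s, hs⟩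
      have hu : u ≠ 0 := fun h => ht (by simp [h])
      refine ha ⟨s * u⁻¹, ?_⟩
      field_simp
      linear_combination hs
    have hdiv : ∀ j : Fin (2 * k), (j : ℕ) / 2 < k := by
      intro j
      have := j.2
      omega
    set L : (Fin k → F) →ₗ[F] (Fin (2 * k) → F) :=
      { toFun := fun y j => (if (j : ℕ) % 2 = 0 then 1 else a) * y ⟨(j : ℕ) / 2, hdiv j⟩
        map_add' := by intro y z; funext j; simp [mul_add]
        map_smul' := by
          intro c y; funext j
          simp only [Pi.smul_apply, smul_eq_mul, RingHom.id_apply]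
          ring } with hLdef
    have hLeven : ∀ (y : Fin k → F) (j0 : Fin k) (h : 2 * (j0 : ℕ) < 2 * k),
        L y ⟨2 * (j0 : ℕ), h⟩ = y j0 := by
      intro y j0 h
      show (if (2 * (j0 : ℕ)) % 2 = 0 then 1 else a) * y ⟨(2 * (j0 : ℕ)) / 2, _⟩ = y j0
      rw [if_pos (by omega), one_mul]
      congr 1
      exact Fin.ext (by simp only [Fin.val_mk]; omega)
    have hLodd : ∀ (y : Fin k → F) (j0 : Fin k) (h : 2 * (j0 : ℕ) + 1 < 2 * k),
        L y ⟨2 * (j0 : ℕ) + 1, h⟩ = a * y j0 := by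
      intro y j0 h
      show (if (2 * (j0 : ℕ) + 1) % 2 = 0 then 1 else a) * y ⟨(2 * (j0 : ℕ) + 1) / 2, _⟩ = a * y j0
      rw [if_neg (by omega)]
      congr 2
      exact Fin.ext (by simp only [Fin.val_mk]; omega)
    have hinj : Function.Injective L := by
      intro u v h
      funext j0
      have h2 : 2 * (j0 : ℕ) < 2 * k := by have := j0.2; omega
      have := congrFun h ⟨2 * (j0 : ℕ), h2⟩
      rwa [hLeven, hLeven] at this
    refine ⟨LinearMap.range L, ?_, ?_⟩
    · rintro x hx y hy hadj
      simp only [SetLike.mem_coe, LinearMap.mem_range] at hx hy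
      obtain ⟨u, rfl⟩ := hx
      obtain ⟨v, rfl⟩ := hy
      obtain ⟨hne, hall⟩ := hadj
      have huv : u ≠ v := fun h => hne (by rw [h])
      obtain ⟨j0, hj0⟩ : ∃ j0, u j0 - v j0 ≠ 0 := by
        by_contra h
        push_neg at h
        exact huv (funext fun j => sub_eq_zero.mp (h j))
      set t := u j0 - v j0 with ht
      -- pick the coordinate where the difference is a nonzero nonsquare
      obtain ⟨j, hc0, hcns⟩ : ∃ j : Fin (2 * k), L u j - L v j ≠ 0 ∧ ¬ IsSquare (L u j - L v j) := by
        by_cases hsq : IsSquare t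
        · have hlt : 2 * (j0 : ℕ) + 1 < 2 * k := by have := j0.2; omega
          refine ⟨⟨2 * (j0 : ℕ) + 1, hlt⟩, ?_, ?_⟩
          · rw [hLodd, hLodd, ← mul_sub]
            exact mul_ne_zero ha0 hj0
          · rw [hLodd, hLodd, ← mul_sub]
            exact hmul t hj0 hsq
        · have hlt : 2 * (j0 : ℕ) < 2 * k := by have := j0.2; omega
          refine ⟨⟨2 * (j0 : ℕ), hlt⟩, ?_, ?_⟩
          · rw [hLeven, hLeven]; exact hj0
          · rw [hLeven, hLeven]; exact hsq
      rcases hall j with h | ⟨-, h | h⟩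
      · exact hc0 (sub_eq_zero.mpr h)
      · exact hcns h.2
      · have : L v j - L u j = -(L u j - L v j) := by ring
        rw [this] at h
        exact hneg _ hcns h.2
    · have e1 : (Fin k → F) ≃ (LinearMap.range L) := (LinearEquiv.ofInjective L hinj).toEquiv
      rw [← Nat.card_congr e1]
      simp [Nat.card_eq_fintype_card, Fintype.card_fun]
end

section
/- Let p ≡ 1 (mod 4) be a prime with p > 13, and G = Γ(F_p, S) with S = {(p−1)/4+1, ..., 3(p−1)/4}. Then every linear independent set in G^n has size at most p^{n/2}, while α(G) ≥ (p+3)/4 > √p, so the Shannon capacity Θ(G) ≥ (p+3)/4 strictly exceeds the linear Shannon capacity upper bound √p. -/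
open SimpleGraph MvPolynomial

/-- Key dimension bound: an independent subspace of the `n`-th strong power has
`2 * dim ≤ n`, provided the "non-neighborhood" `T` of `0` has at most `2m` elements. -/
lemma dim_bound_s16 {p : ℕ} [Fact p.Prime] [NeZero p] {m n : ℕ} (hp : p = 4 * m + 1)
    (hm : 0 < m)
    (S : Set (ZMod p)) (T : Finset (ZMod p)) (hT0 : ∀ t ∈ T, t ≠ 0)
    (hTmem : ∀ x : ZMod p, x ≠ 0 → x ∉ S → -x ∉ S → x ∈ T)
    (hTcard : T.card ≤ 2 * m)
    (W : Submodule (ZMod p) (Fin n → ZMod p))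
    (hW : IsIndep (strongPow (cayley S) n) (W : Set (Fin n → ZMod p))) :
    2 * Module.finrank (ZMod p) W ≤ n := by
  by_contra hcon
  push_neg at hcon
  set d := Module.finrank (ZMod p) W with hd
  have hd1 : 1 ≤ d := by omega
  let B : Module.Basis (Fin d) (ZMod p) W := Module.finBasis (ZMod p) W
  let a : Fin d → Fin n → ZMod p := fun j => (B j : Fin n → ZMod p)
  -- the polynomial
  let L : Fin n → ZMod p → MvPolynomial (Fin d) (ZMod p) :=
    fun i t => (∑ j : Fin d, C (a j i) * X j) - C t
  let g : MvPolynomial (Fin d) (ZMod p) := ∏ i : Fin n, ∏ t ∈ T, L i t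
  -- degree bound
  have hLdeg : ∀ i t, (L i t).totalDegree ≤ 1 := by
    intro i t
    have h1 : (∑ j : Fin d, C (a j i) * X j).totalDegree ≤ 1 := by
      refine le_trans (totalDegree_finset_sum _ _) ?_
      refine Finset.sup_le fun j _ => ?_
      refine le_trans (totalDegree_mul _ _) ?_
      simp [totalDegree_C, totalDegree_X]
    have h2 : L i t = (∑ j : Fin d, C (a j i) * X j) + C (-t) := by
      simp [L, sub_eq_add_neg]
    rw [h2]
    refine le_trans (totalDegree_add _ _) ?_
    simp [totalDegree_C, h1]
  have hgdeg : g.totalDegree ≤ n * (2 * m) := by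
    refine le_trans (totalDegree_finset_prod _ _) ?_
    have : ∀ i : Fin n, (∏ t ∈ T, L i t).totalDegree ≤ 2 * m := by
      intro i
      refine le_trans (totalDegree_finset_prod _ _) ?_
      calc ∑ t ∈ T, (L i t).totalDegree ≤ ∑ t ∈ T, 1 :=
            Finset.sum_le_sum fun t _ => hLdeg i t
        _ = T.card := by simp
        _ ≤ 2 * m := hTcard
    calc ∑ i : Fin n, (∏ t ∈ T, L i t).totalDegree ≤ ∑ _i : Fin n, 2 * m :=
          Finset.sum_le_sum fun i _ => this i
      _ = n * (2 * m) := by simp [Finset.sum_const, mul_comm]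
  -- evaluation of g
  have hevalL : ∀ (y : Fin d → ZMod p) i t,
      eval y (L i t) = (∑ j : Fin d, a j i * y j) - t := by
    intro y i t
    simp [L]
  -- g vanishes away from 0
  have hzero : ∀ y : Fin d → ZMod p, y ≠ 0 → eval y g = 0 := by
    intro y hy
    set wW : W := ∑ j : Fin d, y j • B j with hwW
    have hwW0 : wW ≠ 0 := by
      have : wW = B.equivFun.symm y := by rw [hwW, B.equivFun_symm_apply]
      rw [this]
      simp only [ne_eq, EmbeddingLike.map_eq_zero_iff]
      exact hy
    set w : Fin n → ZMod p := (wW : Fin n → ZMod p) with hw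
    have hwcoord : ∀ i, w i = ∑ j : Fin d, a j i * y j := by
      intro i
      rw [hw, hwW]
      have : ((∑ j : Fin d, y j • B j : W) : Fin n → ZMod p)
          = ∑ j : Fin d, y j • (B j : Fin n → ZMod p) := by
        simp
      rw [this]
      simp [a, mul_comm]
    have hwne : w ≠ 0 := by
      simp only [hw, ne_eq, ZeroMemClass.coe_eq_zero]
      exact hwW0
    have hmem : w ∈ (W : Set (Fin n → ZMod p)) := wW.2
    have h0mem : (0 : Fin n → ZMod p) ∈ (W : Set (Fin n → ZMod p)) := W.zero_mem
    have hnadj : ¬ (w ≠ (0 : Fin n → ZMod p) ∧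
        ∀ i, w i = 0 ∨ (cayley S).Adj (w i) 0) := hW w hmem 0 h0mem
    push_neg at hnadj
    obtain ⟨i, hi0, hinadj⟩ := hnadj hwne
    have hiT : w i ∈ T := by
      have hinadj' : ¬ (w i ≠ (0 : ZMod p) ∧ (w i - 0 ∈ S ∨ 0 - w i ∈ S)) := hinadj
      push_neg at hinadj'
      obtain ⟨hs1, hs2⟩ := hinadj' hi0
      rw [sub_zero] at hs1
      rw [zero_sub] at hs2
      exact hTmem _ hi0 hs1 hs2
    have : eval y g = ∏ i : Fin n, ∏ t ∈ T, ((∑ j : Fin d, a j i * y j) - t) := by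
      simp only [g, map_prod]
      refine Finset.prod_congr rfl fun i _ => Finset.prod_congr rfl fun t _ => hevalL y i t
    rw [this]
    refine Finset.prod_eq_zero (Finset.mem_univ i) ?_
    refine Finset.prod_eq_zero hiT ?_
    rw [← hwcoord i, sub_self]
  -- value at 0
  have heval0 : eval (0 : Fin d → ZMod p) g ≠ 0 := by
    have : eval (0 : Fin d → ZMod p) g = ∏ i : Fin n, ∏ t ∈ T, (-t) := by
      simp only [g, map_prod]
      refine Finset.prod_congr rfl fun i _ => Finset.prod_congr rfl fun t _ => ?_
      rw [hevalL]
      simp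
    rw [this]
    refine Finset.prod_ne_zero_iff.2 fun i _ => Finset.prod_ne_zero_iff.2 fun t ht => ?_
    simpa using hT0 t ht
  -- Chevalley–Warning style contradiction
  have hsum : ∑ y : Fin d → ZMod p, eval y g = eval (0 : Fin d → ZMod p) g := by
    refine Finset.sum_eq_single_of_mem _ (Finset.mem_univ _) fun y _ hy => hzero y hy
  have htriv : ∑ y : Fin d → ZMod p, eval y g = 0 := by
    refine MvPolynomial.sum_eval_eq_zero g ?_
    have hcard : Fintype.card (ZMod p) = p := ZMod.card p
    have hcardd : Fintype.card (Fin d) = d := Fintype.card_fin d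
    rw [hcard, hcardd]
    have h41 : Fintype.card (ZMod p) - 1 = 4 * m := by rw [hcard]; omega
    rw [hcard] at h41
    obtain ⟨e, he⟩ : ∃ e, d = e + 1 := ⟨d - 1, by omega⟩
    refine lt_of_le_of_lt hgdeg ?_
    have h1 : n * (2 * m) ≤ (2 * e + 1) * (2 * m) :=
      Nat.mul_le_mul_right _ (by omega)
    have h2 : (2 * e + 1) * (2 * m) < (2 * e + 2) * (2 * m) := by
      have hmm : 0 < 2 * m := by omega
      exact (Nat.mul_lt_mul_right hmm).2 (by omega)
    have h3 : (2 * e + 2) * (2 * m) = (p - 1) * d := by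
      rw [h41, he]; ring
    omega
  rw [hsum] at htriv
  exact heval0 htriv

theorem stmt16 (p : ℕ) [Fact p.Prime] (h4 : p % 4 = 1) (h13 : 13 < p) (S : Set (ZMod p))
    (hSdef : S = (fun k : ℕ => (k : ZMod p)) '' Set.Icc ((p - 1) / 4 + 1) (3 * (p - 1) / 4)) :
    (∀ n : ℕ, ∀ W : Submodule (ZMod p) (Fin n → ZMod p),
      IsIndep (strongPow (cayley S) n) (W : Set (Fin n → ZMod p)) →
      (Nat.card W : ℝ) ≤ (p : ℝ) ^ ((n : ℝ) / 2)) ∧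
    Real.sqrt p < ((p : ℝ) + 3) / 4 ∧
    (∃ I : Set (ZMod p), IsIndep (cayley S) I ∧ (p + 3) / 4 ≤ I.ncard) ∧
    (∀ n : ℕ, ∃ J : Set (Fin n → ZMod p),
      IsIndep (strongPow (cayley S) n) J ∧ ((p + 3) / 4) ^ n ≤ J.ncard) := by
  classical
  haveI : NeZero p := ⟨(Fact.out : p.Prime).ne_zero⟩
  obtain ⟨m, hp⟩ : ∃ m, p = 4 * m + 1 := ⟨p / 4, by omega⟩
  have hm : 4 ≤ m := by omega
  have hm0 : 0 < m := by omega
  -- rewrite S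
  have hSdef' : S = (fun k : ℕ => (k : ZMod p)) '' Set.Icc (m + 1) (3 * m) := by
    have e1 : (p - 1) / 4 + 1 = m + 1 := by omega
    have e2 : 3 * (p - 1) / 4 = 3 * m := by omega
    rw [hSdef, e1, e2]
  -- basic cast injectivity facts
  have hcastinj : ∀ a b : ℕ, a < p → b < p → (a : ZMod p) = (b : ZMod p) → a = b := by
    intro a b ha hb h
    have := congrArg ZMod.val h
    rwa [ZMod.val_cast_of_lt ha, ZMod.val_cast_of_lt hb] at this
  -- the arithmetic core: small difference can't be in S
  have hkey : ∀ a b s : ℕ, a ≤ m → b ≤ m → m + 1 ≤ s → s ≤ 3 * m →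
      (a : ZMod p) - (b : ZMod p) ≠ (s : ZMod p) := by
    intro a b s ha hb hs1 hs2 h
    have h' : (a : ZMod p) = ((b + s : ℕ) : ZMod p) := by
      push_cast
      rw [← h]; ring
    have := hcastinj a (b + s) (by omega) (by omega) h'
    omega
  -- independent set in the base graph
  set IFin : Finset (ZMod p) := (Finset.range (m + 1)).image (fun k : ℕ => (k : ZMod p))
    with hIFin
  have hIindep : IsIndep (cayley S) (IFin : Set (ZMod p)) := by
    intro x hx y hy hadj
    simp only [hIFin, Finset.coe_image, Set.mem_image, Finset.coe_range, Set.mem_Iio] at hx hy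
    obtain ⟨A, hA, rfl⟩ := hx
    obtain ⟨B, hB, rfl⟩ := hy
    obtain ⟨hne, hor⟩ := hadj
    rw [hSdef'] at hor
    rcases hor with h | h
    · obtain ⟨s, hs, hseq⟩ := h
      exact hkey A B s (by omega) (by omega) (by exact hs.1) hs.2 hseq.symm
    · obtain ⟨s, hs, hseq⟩ := h
      exact hkey B A s (by omega) (by omega) (by exact hs.1) hs.2 hseq.symm
  have hIcard : IFin.card = m + 1 := by
    rw [hIFin, Finset.card_image_of_injOn, Finset.card_range]
    intro x hx y hy h
    simp only [Finset.coe_range, Set.mem_Iio] at hx hy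
    exact hcastinj x y (by omega) (by omega) h
  -- the T set for the dimension bound
  set T : Finset (ZMod p) :=
    Finset.univ.filter (fun x : ZMod p => x ≠ 0 ∧ x ∉ S ∧ -x ∉ S) with hT
  have hT0 : ∀ t ∈ T, t ≠ 0 := by
    intro t ht
    rw [hT, Finset.mem_filter] at ht
    exact ht.2.1
  have hTmem : ∀ x : ZMod p, x ≠ 0 → x ∉ S → -x ∉ S → x ∈ T := by
    intro x h1 h2 h3
    rw [hT, Finset.mem_filter]
    exact ⟨Finset.mem_univ _, h1, h2, h3⟩
  -- card of S-part
  set SFin : Finset (ZMod p) := (Finset.Icc (m + 1) (3 * m)).image (fun k : ℕ => (k : ZMod p))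
    with hSFin
  have hSFincard : SFin.card = 2 * m := by
    rw [hSFin, Finset.card_image_of_injOn, Nat.card_Icc]
    · omega
    · intro x hx y hy h
      simp only [Finset.coe_Icc, Set.mem_Icc] at hx hy
      exact hcastinj x y (by omega) (by omega) h
  have hSFinS : ∀ x ∈ SFin, x ∈ S := by
    intro x hx
    rw [hSFin, Finset.mem_image] at hx
    obtain ⟨k, hk, rfl⟩ := hx
    rw [hSdef']
    exact ⟨k, by simpa using hk, rfl⟩
  have hSFin0 : (0 : ZMod p) ∉ SFin := by
    rw [hSFin, Finset.mem_image]
    rintro ⟨k, hk, hk0⟩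
    simp only [Finset.mem_Icc] at hk
    have := hcastinj k 0 (by omega) (by omega) (by simpa using hk0)
    omega
  have hTcard : T.card ≤ 2 * m := by
    have hsub : T ⊆ Finset.univ \ insert 0 SFin := by
      intro x hx
      rw [hT, Finset.mem_filter] at hx
      rw [Finset.mem_sdiff]
      refine ⟨Finset.mem_univ _, ?_⟩
      rw [Finset.mem_insert]
      rintro (rfl | h)
      · exact hx.2.1 rfl
      · exact hx.2.2.1 (hSFinS _ h)
    have h1 := Finset.card_le_card hsub
    rw [Finset.card_sdiff_of_subset (Finset.subset_univ _)] at h1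
    rw [Finset.card_insert_of_notMem hSFin0, hSFincard] at h1
    have h2 : (Finset.univ : Finset (ZMod p)).card = p := by
      rw [Finset.card_univ, ZMod.card]
    omega
  refine ⟨?_, ?_, ?_, ?_⟩
  · -- part 1: the linear bound
    intro n W hWindep
    have hdim := dim_bound_s16 hp hm0 S T hT0 hTmem hTcard W hWindep
    have hcardW : Nat.card W = p ^ Module.finrank (ZMod p) W := by
      rw [Nat.card_eq_fintype_card, Module.card_eq_pow_finrank (K := ZMod p) (V := W), ZMod.card]
    rw [hcardW]
    set dd := Module.finrank (ZMod p) W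
    have hple : (1 : ℝ) ≤ (p : ℝ) := by
      have : (1 : ℕ) ≤ p := by omega
      exact_mod_cast this
    have : ((p ^ dd : ℕ) : ℝ) = (p : ℝ) ^ ((dd : ℕ) : ℝ) := by
      push_cast
      rw [Real.rpow_natCast]
    rw [this]
    refine Real.rpow_le_rpow_of_exponent_le hple ?_
    have : (2 * dd : ℝ) ≤ (n : ℝ) := by exact_mod_cast hdim
    linarith
  · -- part 2: sqrt p < (p+3)/4
    have hp14 : (14 : ℝ) ≤ (p : ℝ) := by exact_mod_cast (by omega : (14 : ℕ) ≤ p)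
    rw [Real.sqrt_lt' (by linarith)]
    nlinarith [hp14]
  · -- part 3: independent set of size (p+3)/4
    refine ⟨(IFin : Set (ZMod p)), hIindep, ?_⟩
    rw [Set.ncard_coe_finset, hIcard]
    omega
  · -- part 4: independent sets in powers
    intro n
    set JFin : Finset (Fin n → ZMod p) := Fintype.piFinset (fun _ : Fin n => IFin) with hJ
    refine ⟨(JFin : Set (Fin n → ZMod p)), ?_, ?_⟩
    · intro f hf g hg hadj
      simp only [hJ, Finset.mem_coe, Fintype.mem_piFinset] at hf hg
      obtain ⟨hne, hall⟩ := hadj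
      obtain ⟨i, hi⟩ := Function.ne_iff.1 hne
      rcases hall i with h | h
      · exact hi h
      · exact hIindep (f i) (hf i) (g i) (hg i) h
    · rw [Set.ncard_coe_finset, hJ, Fintype.card_piFinset]
      simp only [hIcard, Finset.prod_const, Finset.card_univ, Fintype.card_fin]
      have : (p + 3) / 4 = m + 1 := by omega
      rw [this]
end

section
/- Let G = Γ(F_p, S) be a Cayley graph over the cyclic group Z/pZ (p prime) that is isomorphic to its complement, and suppose (Ádám's conjecture for primes) that the complement connection set satisfies (F_p\{0})\S = a·S for some a ∈ F_p. Then the map x ↦ a·x is an isomorphism from G to its complement, and consequently {(x, ax) : x ∈ F_p} is a linear independent set of size p in G^2. -/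
open SimpleGraph MvPolynomial

theorem stmt19 (p : ℕ) [Fact p.Prime] (S : Set (ZMod p))
    (hS : ∀ s ∈ S, -s ∈ S) (h0 : (0 : ZMod p) ∉ S)
    (hIso : Nonempty (cayley S ≃g (cayley S)ᶜ))
    (a : ZMod p) (hAdam : {x : ZMod p | x ≠ 0} \ S = (fun x => a * x) '' S) :
    (∃ e : cayley S ≃g (cayley S)ᶜ, ∀ x : ZMod p, e x = a * x) ∧
    IsIndep (strongPow (cayley S) 2) {z : Fin 2 → ZMod p | ∃ x : ZMod p, z = ![x, a * x]} ∧
    Nat.card {z : Fin 2 → ZMod p | ∃ x : ZMod p, z = ![x, a * x]} = p := by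
  have h1 : (1 : ZMod p) ≠ 0 := one_ne_zero
  have ha : a ≠ 0 := by
    intro h; subst h
    by_cases hs : ∃ s, s ∈ S
    · obtain ⟨s, hs⟩ := hs
      have hmem : (0:ZMod p) ∈ {x : ZMod p | x ≠ 0} \ S := by
        rw [hAdam]; exact ⟨s, hs, by ring⟩
      exact hmem.1 rfl
    · push_neg at hs
      have hmem : (1:ZMod p) ∈ {x : ZMod p | x ≠ 0} \ S := ⟨h1, hs 1⟩
      rw [hAdam] at hmem
      obtain ⟨s, hsS, -⟩ := hmem
      exact hs s hsS
  have key1 : ∀ x ∈ S, a * x ∉ S := by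
    intro x hx
    have hmem : a * x ∈ {x : ZMod p | x ≠ 0} \ S := by
      rw [hAdam]; exact ⟨x, hx, rfl⟩
    exact hmem.2
  have key2 : ∀ x : ZMod p, x ≠ 0 → x ∉ S → a * x ∈ S := by
    intro x hx hxS
    by_contra h
    have hax : a * x ≠ 0 := mul_ne_zero ha hx
    have hmem : a * x ∈ {x : ZMod p | x ≠ 0} \ S := ⟨hax, h⟩
    rw [hAdam] at hmem
    obtain ⟨s, hsS, hse⟩ := hmem
    have hxs : x = s := mul_left_cancel₀ ha hse.symm
    exact hxS (hxs ▸ hsS)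
  have adj_iff : ∀ u v : ZMod p, (cayley S).Adj u v ↔ u ≠ v ∧ u - v ∈ S := by
    intro u v
    constructor
    · rintro ⟨hne, h | h⟩
      · exact ⟨hne, h⟩
      · exact ⟨hne, by simpa using hS _ h⟩
    · rintro ⟨hne, h⟩; exact ⟨hne, Or.inl h⟩
  have hmap : ∀ u v : ZMod p, (cayley S)ᶜ.Adj (a*u) (a*v) ↔ (cayley S).Adj u v := by
    intro u v
    rw [SimpleGraph.compl_adj, adj_iff u v]
    constructor
    · rintro ⟨hne, hnadj⟩
      have huv : u ≠ v := fun h => hne (by rw [h])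
      refine ⟨huv, ?_⟩
      by_contra hns
      exact hnadj ((adj_iff _ _).mpr ⟨hne, by
        rw [← mul_sub]; exact key2 _ (sub_ne_zero.mpr huv) hns⟩)
    · rintro ⟨huv, hs⟩
      refine ⟨fun h => huv (mul_left_cancel₀ ha h), fun hadj => ?_⟩
      have hmem := ((adj_iff _ _).mp hadj).2
      rw [← mul_sub] at hmem
      exact key1 _ hs hmem
  refine ⟨⟨⟨Equiv.mulLeft₀ a ha, fun {u v} => hmap u v⟩, fun x => rfl⟩, ?_, ?_⟩
  · rintro z ⟨x, rfl⟩ w ⟨y, rfl⟩ ⟨hne, hall⟩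
    have hxy : x ≠ y := by
      rintro rfl; exact hne rfl
    have h0' := hall 0
    simp only [Matrix.cons_val_zero] at h0'
    have hxyS : x - y ∈ S := by
      rcases h0' with h | h
      · exact absurd h hxy
      · exact ((adj_iff x y).mp h).2
    have h1' := hall 1
    simp only [Matrix.cons_val_one, Matrix.head_cons, Matrix.cons_val_zero] at h1'
    rcases h1' with h | h
    · exact hxy (mul_left_cancel₀ ha h)
    · have h2 := ((adj_iff _ _).mp h).2
      rw [← mul_sub] at h2
      exact key1 _ hxyS h2
  · have hbij : Function.Bijective
        (fun x : ZMod p => (⟨![x, a*x], x, rfl⟩ :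
          {z : Fin 2 → ZMod p | ∃ x : ZMod p, z = ![x, a * x]})) := by
      constructor
      · intro x y h
        have h' := congrFun (congrArg Subtype.val h) 0
        simpa using h'
      · rintro ⟨z, x, rfl⟩
        exact ⟨x, rfl⟩
    have := Nat.card_congr (Equiv.ofBijective _ hbij)
    rw [← this, Nat.card_eq_fintype_card, ZMod.card]
end
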